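/- If f : ℝ^d → ℝ^d is continuously differentiable with lower triangular Jacobian everywhere whose diagonal entries are all strictly positive, then f is injective. -/

import Mathlib

/-- A C¹ map with everywhere lower triangular Jacobian with strictly positive
diagonal entries is injective. -/
theorem injective_of_lower_triangular_pos_diag_jacobian
    (d : ℕ) (f : (Fin d → ℝ) → (Fin d → ℝ))
    (hf : ContDiff ℝ 1 f)
    (hlt : ∀ (x : Fin d → ℝ) (i j : Fin d), i < j →
      fderiv ℝ f x (Pi.single j 1) i = 0)
    (hpos : ∀ (x : Fin d → ℝ) (i : Fin d), 0 < fderiv ℝ f x (Pi.single i 1) i) :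
    Function.Injective f := by
  have hdiff : Differentiable ℝ f := hf.differentiable one_ne_zero
  -- derivative of a coordinate line
  have hline : ∀ (b : Fin d → ℝ) (j i : Fin d) (t : ℝ),
      HasDerivAt (fun s => f (Function.update b j s) i)
        (fderiv ℝ f (Function.update b j t) (Pi.single j 1) i) t := by
    intro b j i t
    have h1 := hasDerivAt_update b j t
    have h2 := (hdiff (Function.update b j t)).hasFDerivAt
    have h3 := h2.comp_hasDerivAt t h1
    exact (ContinuousLinearMap.proj (R := ℝ) (φ := fun _ : Fin d => ℝ) i
      ).hasFDerivAt.comp_hasDerivAt t h3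
  -- changing coordinates above i does not change component i
  have hconst : ∀ (b : Fin d → ℝ) (i j : Fin d), i < j → ∀ s t : ℝ,
      f (Function.update b j s) i = f (Function.update b j t) i := by
    intro b i j hij s t
    apply is_const_of_deriv_eq_zero (f := fun s => f (Function.update b j s) i)
    · intro u
      exact (hline b j i u).differentiableAt
    · intro u
      rw [(hline b j i u).deriv]
      exact hlt _ i j hij
  -- if a and b agree on all coordinates ≤ i, then f a i = f b i
  have hagree : ∀ n : ℕ, ∀ (a b : Fin d → ℝ) (i : Fin d),
      (∀ j : Fin d, a j ≠ b j → i < j) →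
      (Finset.univ.filter (fun j => a j ≠ b j)).card ≤ n → f a i = f b i := by
    intro n
    induction n with
    | zero =>
      intro a b i _ hcard
      have : a = b := by
        funext j
        by_contra hj
        have : j ∈ Finset.univ.filter (fun j => a j ≠ b j) := by simp [hj]
        have := Finset.card_pos.mpr ⟨j, this⟩
        omega
      rw [this]
    | succ n ih =>
      intro a b i hcond hcard
      by_cases hempty : (Finset.univ.filter (fun j => a j ≠ b j)) = ∅
      · have : a = b := by
          funext j
          by_contra hj
          have : j ∈ Finset.univ.filter (fun j => a j ≠ b j) := by simp [hj]
          rw [hempty] at this; simp at this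
        rw [this]
      · obtain ⟨j, hj⟩ := Finset.nonempty_iff_ne_empty.mpr hempty
        simp only [Finset.mem_filter, Finset.mem_univ, true_and] at hj
        set b' := Function.update b j (a j) with hb'
        have hab' : f a i = f b' i := by
          apply ih
          · intro k hk
            have hkj : k ≠ j := by
              intro h; subst h
              simp [hb'] at hk
            have : a k ≠ b k := by
              simpa [hb', Function.update_of_ne hkj] using hk
            exact hcond k this
          · have hsub : (Finset.univ.filter (fun k => a k ≠ b' k)) ⊆
                (Finset.univ.filter (fun k => a k ≠ b k)).erase j := by
              intro k hk
              simp only [Finset.mem_filter, Finset.mem_univ, true_and] at hk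
              have hkj : k ≠ j := by
                intro h; subst h; simp [hb'] at hk
              rw [Finset.mem_erase]
              refine ⟨hkj, ?_⟩
              simpa [Finset.mem_filter, hb', Function.update_of_ne hkj] using hk
            have h1 := Finset.card_le_card hsub
            have h2 : ((Finset.univ.filter (fun k => a k ≠ b k)).erase j).card
                = (Finset.univ.filter (fun k => a k ≠ b k)).card - 1 := by
              apply Finset.card_erase_of_mem
              simp [hj]
            omega
        have hb'b : f b' i = f b i := by
          have := hconst b i j (hcond j hj) (a j) (b j)
          simpa [Function.update_eq_self] using this
        rw [hab', hb'b]
  -- main proof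
  intro x y hxy
  have key : ∀ n : ℕ, ∀ i : Fin d, i.val < n → x i = y i := by
    intro n
    induction n with
    | zero => intro i hi; omega
    | succ n ih =>
      intro i hi
      rcases lt_or_eq_of_le (Nat.lt_succ_iff.mp hi) with h | h
      · exact ih i h
      -- i.val = n; all j < i agree
      have hlow : ∀ j : Fin d, j < i → x j = y j := by
        intro j hj
        exact ih j (by omega)
      set b := Function.update y i (x i) with hb
      -- f x i = f b i
      have h1 : f x i = f b i := by
        apply hagree d x b i
        · intro j hj
          rcases lt_trichotomy i j with h' | h' | h'
          · exact h'
          · exfalso; subst h'; simp [hb] at hj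
          · exfalso
            have := hlow j h'
            have hji : j ≠ i := Fin.ne_of_lt h'
            rw [hb, Function.update_of_ne hji] at hj
            exact hj this
        · exact le_trans (Finset.card_le_card (Finset.subset_univ _)) (by simp)
      -- strictly monotone in coordinate i
      have hmono : StrictMono (fun s => f (Function.update y i s) i) := by
        apply strictMono_of_deriv_pos
        intro u
        rw [(hline y i i u).deriv]
        exact hpos _ i
      have h2 : f (Function.update y i (x i)) i = f (Function.update y i (y i)) i := by
        rw [Function.update_eq_self]
        rw [← h1, hxy]
      have := hmono.injective h2
      rw [this]
  exact funext fun i => key d i i.isLt
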